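/- Let f be monostable (continuous, f(0)=f(1)=0, f>0 on (0,1), f'(0⁺)>0, f'(1⁻)<0, extended by 0 outside [0,1]) and let ϱ ≥ 0. Then the ODE φ'' + f(φ) = 0 on [0,∞) with φ'(0) = ϱ⁻¹φ(0) (interpreted as φ(0)=0 when ϱ=0) has a unique nonzero bounded solution φ; it satisfies 0 ≤ φ < 1, φ' > 0, and φ(+∞) = 1. -/

import Mathlib

open Set Filter Topology
set_option linter.unusedSectionVars false
set_option linter.unusedVariables false

namespace Stmt9Aux
variable {f : ℝ → ℝ} (hf : Continuous f) (hf0 : f 0 = 0) (hf1 : f 1 = 0)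
  (hfpos : ∀ s ∈ Ioo (0:ℝ) 1, 0 < f s) (hfout : ∀ s, s ∉ Icc (0:ℝ) 1 → f s = 0)

noncomputable def FF (f : ℝ → ℝ) (s : ℝ) : ℝ := 2 * ∫ t in s..1, f t
noncomputable def GG (f : ℝ → ℝ) (s : ℝ) : ℝ := 2 * ∫ t in (0:ℝ)..s, f t
noncomputable def gg (f : ℝ → ℝ) (s : ℝ) : ℝ := Real.sqrt (FF f s)

include hf hf0 hf1 hfpos hfout

lemma f_nonneg : ∀ s, 0 ≤ f s := by
  intro s
  by_cases h : s ∈ Icc (0:ℝ) 1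
  · rcases eq_or_lt_of_le h.1 with h0 | h0
    · simp [← h0, hf0]
    rcases eq_or_lt_of_le h.2 with h1 | h1
    · simp [h1, hf1]
    exact (hfpos s ⟨h0, h1⟩).le
  · simp [hfout s h]

lemma f_intble (u v : ℝ) : IntervalIntegrable f MeasureTheory.volume u v :=
  hf.intervalIntegrable u v

lemma FF_hasDeriv (s : ℝ) : HasDerivAt (FF f) (-(2 * f s)) s := by
  have h1 : HasDerivAt (fun u => ∫ t in (1:ℝ)..u, f t) (f s) s :=
    intervalIntegral.integral_hasDerivAt_right (f_intble hf hf0 hf1 hfpos hfout 1 s)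
      (hf.stronglyMeasurableAtFilter _ _) hf.continuousAt
  have h2 : HasDerivAt (fun u => 2 * -∫ t in (1:ℝ)..u, f t) (2 * -f s) s :=
    (h1.neg).const_mul 2
  have heq : FF f = fun u => 2 * -∫ t in (1:ℝ)..u, f t := by
    funext u
    unfold FF
    rw [intervalIntegral.integral_symm]
  rw [heq]
  convert h2 using 1
  ring

lemma FF_cont : Continuous (FF f) := by
  have := fun s => (FF_hasDeriv hf hf0 hf1 hfpos hfout s).continuousAt
  exact continuous_iff_continuousAt.2 this

lemma FF_sub (u v : ℝ) : FF f u - FF f v = 2 * ∫ t in u..v, f t := by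
  unfold FF
  rw [← intervalIntegral.integral_add_adjacent_intervals (f_intble hf hf0 hf1 hfpos hfout u v)
    (f_intble hf hf0 hf1 hfpos hfout v 1)]
  ring

lemma FF_antitone : Antitone (FF f) := by
  intro u v huv
  have h := FF_sub hf hf0 hf1 hfpos hfout u v
  have : 0 ≤ ∫ t in u..v, f t :=
    intervalIntegral.integral_nonneg huv (fun t _ => f_nonneg hf hf0 hf1 hfpos hfout t)
  linarith

lemma FF_one : FF f 1 = 0 := by simp [FF]

lemma FF_of_one_le {s : ℝ} (hs : 1 ≤ s) : FF f s = 0 := by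
  have h : ∀ t ∈ uIcc (1:ℝ) s, f t = 0 := by
    intro t ht
    rw [uIcc_of_le hs] at ht
    rcases eq_or_lt_of_le ht.1 with h1 | h1
    · simp [← h1, hf1]
    · exact hfout t (fun hc => absurd hc.2 (not_le.2 h1))
  have hz : (∫ t in (1:ℝ)..s, f t) = ∫ t in (1:ℝ)..s, (0:ℝ) :=
    intervalIntegral.integral_congr h
  unfold FF
  rw [intervalIntegral.integral_symm, hz]
  simp

lemma FF_pos {s : ℝ} (hs : s < 1) : 0 < FF f s := by
  have h0 : 0 < FF f 0 := by
    unfold FF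
    have : 0 < ∫ t in (0:ℝ)..1, f t :=
      intervalIntegral.intervalIntegral_pos_of_pos_on (f_intble hf hf0 hf1 hfpos hfout 0 1)
        hfpos one_pos
    linarith
  by_cases h : 0 ≤ s
  · unfold FF
    have : 0 < ∫ t in s..1, f t :=
      intervalIntegral.intervalIntegral_pos_of_pos_on (f_intble hf hf0 hf1 hfpos hfout s 1)
        (fun t ht => hfpos t ⟨lt_of_le_of_lt h ht.1, ht.2⟩) hs
    linarith
  · exact lt_of_lt_of_le h0 (FF_antitone hf hf0 hf1 hfpos hfout (le_of_not_ge h))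

lemma FF_eq_GG (s : ℝ) : FF f s = GG f 1 - GG f s := by
  unfold GG
  have := FF_sub hf hf0 hf1 hfpos hfout s 1
  have h0 := FF_sub hf hf0 hf1 hfpos hfout 0 s
  have h1 := FF_sub hf hf0 hf1 hfpos hfout 0 1
  have := FF_one hf hf0 hf1 hfpos hfout
  linarith

lemma GG_hasDeriv (s : ℝ) : HasDerivAt (GG f) (2 * f s) s := by
  have h1 : HasDerivAt (fun u => ∫ t in (0:ℝ)..u, f t) (f s) s :=
    intervalIntegral.integral_hasDerivAt_right (f_intble hf hf0 hf1 hfpos hfout 0 s)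
      (hf.stronglyMeasurableAtFilter _ _) hf.continuousAt
  exact h1.const_mul 2

lemma GG_cont : Continuous (GG f) :=
  continuous_iff_continuousAt.2 fun s => (GG_hasDeriv hf hf0 hf1 hfpos hfout s).continuousAt

lemma gg_pos {s : ℝ} (hs : s < 1) : 0 < gg f s :=
  Real.sqrt_pos.2 (FF_pos hf hf0 hf1 hfpos hfout hs)

lemma gg_cont : Continuous (gg f) :=
  Real.continuous_sqrt.comp (FF_cont hf hf0 hf1 hfpos hfout)

lemma gg_antitone : Antitone (gg f) := fun u v huv =>
  Real.sqrt_le_sqrt (FF_antitone hf hf0 hf1 hfpos hfout huv)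

lemma gg_hasDeriv {s : ℝ} (hs : s < 1) :
    HasDerivAt (gg f) (-f s / gg f s) s := by
  have hF := FF_hasDeriv hf hf0 hf1 hfpos hfout s
  have hFpos := FF_pos hf hf0 hf1 hfpos hfout hs
  have h := (Real.hasDerivAt_sqrt (ne_of_gt hFpos)).comp s hF
  refine h.congr_deriv ?_
  unfold gg
  field_simp

-- root of s = ϱ * g s
lemma root_exists (ϱ : ℝ) (hϱ : 0 ≤ ϱ) :
    ∃ c, 0 ≤ c ∧ c < 1 ∧ c = ϱ * gg f c := by
  set h : ℝ → ℝ := fun s => s - ϱ * gg f s with hh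
  have hcont : ContinuousOn h (Icc 0 1) :=
    (continuous_id.sub (continuous_const.mul (gg_cont hf hf0 hf1 hfpos hfout))).continuousOn
  have h0 : h 0 ≤ 0 := by
    simp only [hh]
    have := Real.sqrt_nonneg (FF f 0)
    have : 0 ≤ ϱ * gg f 0 := mul_nonneg hϱ (Real.sqrt_nonneg _)
    linarith
  have h1 : h 1 = 1 := by
    simp only [hh, gg, FF_one hf hf0 hf1 hfpos hfout, Real.sqrt_zero, mul_zero, sub_zero]
  have : (0:ℝ) ∈ Icc (h 0) (h 1) := ⟨h0, by rw [h1]; norm_num⟩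
  obtain ⟨c, hc, hc0⟩ := intermediate_value_Icc zero_le_one hcont this
  have hceq : c = ϱ * gg f c := by
    have : c - ϱ * gg f c = 0 := hc0
    linarith
  refine ⟨c, hc.1, ?_, hceq⟩
  rcases eq_or_lt_of_le hc.2 with h | h
  · exfalso
    rw [h] at hc0
    rw [h1] at hc0
    norm_num at hc0
  · exact h

lemma root_unique {c1 c2 : ℝ} (ϱ : ℝ) (hϱ : 0 ≤ ϱ)
    (h1 : c1 = ϱ * gg f c1) (h2 : c2 = ϱ * gg f c2) : c1 = c2 := by
  rcases lt_trichotomy c1 c2 with h | h | h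
  · exfalso
    have : gg f c2 ≤ gg f c1 := gg_antitone hf hf0 hf1 hfpos hfout h.le
    nlinarith
  · exact h
  · exfalso
    have : gg f c1 ≤ gg f c2 := gg_antitone hf hf0 hf1 hfpos hfout h.le
    nlinarith

noncomputable def YY (f : ℝ → ℝ) (c : ℝ) (s : ℝ) : ℝ := ∫ t in c..s, (gg f t)⁻¹

variable {c : ℝ} (hc0 : 0 ≤ c) (hc1 : c < 1)

include hc0 hc1

lemma gginv_contOn : ContinuousOn (fun t => (gg f t)⁻¹) (Iio 1) := by
  intro t ht
  exact ((gg_cont hf hf0 hf1 hfpos hfout).continuousAt.inv₀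
    (ne_of_gt (gg_pos hf hf0 hf1 hfpos hfout ht))).continuousWithinAt

lemma gginv_intble {u v : ℝ} (hu : u < 1) (hv : v < 1) :
    IntervalIntegrable (fun t => (gg f t)⁻¹) MeasureTheory.volume u v := by
  apply ContinuousOn.intervalIntegrable
  apply (gginv_contOn hf hf0 hf1 hfpos hfout hc0 hc1).mono
  intro t ht
  rw [mem_uIcc] at ht
  rcases ht with h | h
  · exact lt_of_le_of_lt h.2 hv
  · exact lt_of_le_of_lt h.2 hu

lemma YY_hasDeriv {s : ℝ} (hs : s < 1) :
    HasDerivAt (YY f c) (gg f s)⁻¹ s := by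
  apply intervalIntegral.integral_hasDerivAt_right
    (gginv_intble hf hf0 hf1 hfpos hfout hc0 hc1 hc1 hs)
  · exact ((gg_cont hf hf0 hf1 hfpos hfout).measurable.inv.stronglyMeasurable).stronglyMeasurableAtFilter
  · exact (gg_cont hf hf0 hf1 hfpos hfout).continuousAt.inv₀
      (ne_of_gt (gg_pos hf hf0 hf1 hfpos hfout hs))

lemma YY_c : YY f c c = 0 := by simp [YY]

lemma YY_contOn : ContinuousOn (YY f c) (Iio 1) := fun s hs =>
  ((YY_hasDeriv hf hf0 hf1 hfpos hfout hc0 hc1 hs).continuousAt).continuousWithinAt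

lemma YY_strictMonoOn : StrictMonoOn (YY f c) (Iio 1) := by
  apply strictMonoOn_of_deriv_pos (convex_Iio 1) (YY_contOn hf hf0 hf1 hfpos hfout hc0 hc1)
  intro x hx
  rw [interior_Iio] at hx
  rw [(YY_hasDeriv hf hf0 hf1 hfpos hfout hc0 hc1 hx).deriv]
  exact inv_pos.2 (gg_pos hf hf0 hf1 hfpos hfout hx)

lemma YY_monoOn : MonotoneOn (YY f c) (Iio 1) :=
  (YY_strictMonoOn hf hf0 hf1 hfpos hfout hc0 hc1).monotoneOn

omit hc0 hc1 in
lemma FF_of_nonpos {s : ℝ} (hs : s ≤ 0) : FF f s = FF f 0 := by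
  have h : ∀ t ∈ uIcc s 0, f t = 0 := by
    intro t ht
    rw [uIcc_of_le hs] at ht
    rcases eq_or_lt_of_le ht.2 with h1 | h1
    · simp [h1, hf0]
    · exact hfout t (fun hcon => absurd hcon.1 (not_le.2 h1))
  have hz : (∫ t in s..(0:ℝ), f t) = ∫ t in s..(0:ℝ), (0:ℝ) :=
    intervalIntegral.integral_congr h
  have := FF_sub hf hf0 hf1 hfpos hfout s 0
  rw [hz] at this
  simp at this
  linarith

lemma YY_sub {u v : ℝ} (hu : u < 1) (hv : v < 1) :
    YY f c v - YY f c u = ∫ t in u..v, (gg f t)⁻¹ := by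
  unfold YY
  rw [← intervalIntegral.integral_add_adjacent_intervals
    (gginv_intble hf hf0 hf1 hfpos hfout hc0 hc1 hc1 hu)
    (gginv_intble hf hf0 hf1 hfpos hfout hc0 hc1 hu hv)]
  ring

lemma YY_unbdd_below : ∀ C : ℝ, ∃ s, s < 1 ∧ YY f c s < C := by
  intro C
  set k : ℝ := (gg f 0)⁻¹ with hk
  have hkpos : 0 < k := inv_pos.2 (gg_pos hf hf0 hf1 hfpos hfout one_pos)
  set s : ℝ := min 0 ((C - YY f c 0 - 1)/k) with hs
  have hs0 : s ≤ 0 := min_le_left _ _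
  have hs1 : s < 1 := lt_of_le_of_lt hs0 one_pos
  refine ⟨s, hs1, ?_⟩
  have hsub := YY_sub hf hf0 hf1 hfpos hfout hc0 hc1 (lt_of_le_of_lt hs0 one_pos) one_pos
  -- ∫ s..0 of gg⁻¹ equals const
  have hcongr : ∀ t ∈ uIcc s (0:ℝ), (gg f t)⁻¹ = k := by
    intro t ht
    rw [uIcc_of_le hs0] at ht
    have : FF f t = FF f 0 := FF_of_nonpos hf hf0 hf1 hfpos hfout ht.2
    rw [hk]
    unfold gg
    rw [this]
  have : (∫ t in s..(0:ℝ), (gg f t)⁻¹) = ∫ t in s..(0:ℝ), k :=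
    intervalIntegral.integral_congr hcongr
  have hint : (∫ t in s..(0:ℝ), (gg f t)⁻¹) = (0 - s) * k := by
    rw [this]
    simp [smul_eq_mul]
  have h2 : YY f c 0 - YY f c s = (0 - s) * k := by
    rw [YY_sub hf hf0 hf1 hfpos hfout hc0 hc1 hs1 one_pos, hint]
  have h3 : s * k ≤ ((C - YY f c 0 - 1)/k) * k := by
    apply mul_le_mul_of_nonneg_right (min_le_right _ _) hkpos.le
  rw [div_mul_cancel₀ _ (ne_of_gt hkpos)] at h3
  have : YY f c s = YY f c 0 + s * k := by linarith
  linarith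

lemma f_upper {b : ℝ} (hb : b < 0) (hderiv1 : HasDerivWithinAt f b (Iic 1) 1) :
    ∃ a₀, c ≤ a₀ ∧ 0 ≤ a₀ ∧ a₀ < 1 ∧
      ∀ s, a₀ ≤ s → s ≤ 1 → f s ≤ (3/2 * (-b)) * (1 - s) := by
  have hlo := hderiv1.isLittleO
  have heps : (0:ℝ) < -b/2 := by linarith
  have hev : ∀ᶠ x in 𝓝[Iic 1] 1, ‖f x - f 1 - (x - 1) • b‖ ≤ (-b/2) * ‖x - 1‖ :=
    hlo.def heps
  rw [Filter.eventually_iff, mem_nhdsLE_iff_exists_Ioc_subset] at hev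
  obtain ⟨l, hl, hsub⟩ := hev
  rw [mem_Iio] at hl
  set a₀ : ℝ := max (max c 0) ((l+1)/2) with ha₀
  have hca : c ≤ a₀ := le_trans (le_max_left _ _) (le_max_left _ _)
  have h0a : 0 ≤ a₀ := le_trans (le_max_right _ _) (le_max_left _ _)
  have hla : l < a₀ := lt_of_lt_of_le (by linarith) (le_max_right _ _)
  have ha1 : a₀ < 1 := by
    apply max_lt (max_lt hc1 one_pos)
    linarith
  refine ⟨a₀, hca, h0a, ha1, ?_⟩
  intro s hs hs1
  have hmem : s ∈ Ioc l 1 := ⟨lt_of_lt_of_le hla hs, hs1⟩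
  have := hsub hmem
  simp only [mem_setOf_eq, hf1, sub_zero, smul_eq_mul, Real.norm_eq_abs] at this
  rw [abs_sub_comm, abs_of_nonpos (by linarith : s - 1 ≤ 0)] at this
  have habs := abs_le.1 this
  have h1 := habs.2
  nlinarith [habs.1, habs.2]

lemma FF_upper {b : ℝ} (hb : b < 0) {a₀ : ℝ} (h0a : 0 ≤ a₀) (ha1 : a₀ < 1)
    (hfu : ∀ s, a₀ ≤ s → s ≤ 1 → f s ≤ (3/2 * (-b)) * (1 - s)) :
    ∀ t, a₀ ≤ t → t ≤ 1 → FF f t ≤ (3 * (-b)) * (1 - t)^2 := by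
  intro t hat ht1
  have hint : (∫ u in t..1, (3/2 * (-b)) * (1 - u)) = (3/2 * (-b)) * ((1-t)^2/2) := by
    have hP : ∀ u ∈ uIcc t 1, HasDerivAt (fun u => (3/2 * (-b)) * (-(1-u)^2/2)) ((3/2 * (-b)) * (1 - u)) u := by
      intro u _
      have h1 : HasDerivAt (fun u : ℝ => -(1-u)^2/2) (1 - u) u := by
        have : HasDerivAt (fun u : ℝ => (1-u)) (-1) u := by
          simpa using (hasDerivAt_id u).const_sub 1
        have := (this.pow 2).neg.div_const 2
        refine this.congr_deriv ?_
        ring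
      exact h1.const_mul _
    have hcont : IntervalIntegrable (fun u => (3/2 * (-b)) * (1 - u)) MeasureTheory.volume t 1 :=
      (Continuous.intervalIntegrable (by continuity) t 1)
    rw [intervalIntegral.integral_eq_sub_of_hasDerivAt hP hcont]
    ring
  have hmono : (∫ u in t..1, f u) ≤ ∫ u in t..1, (3/2 * (-b)) * (1 - u) := by
    apply intervalIntegral.integral_mono_on ht1 (f_intble hf hf0 hf1 hfpos hfout t 1)
      (Continuous.intervalIntegrable (by continuity) t 1)
    intro x hx
    exact hfu x (le_trans hat hx.1) hx.2
  have : FF f t = 2 * ∫ u in t..1, f u := rfl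
  rw [this, hint] at *
  nlinarith [hmono]

lemma YY_unbdd_above {b : ℝ} (hb : b < 0) (hderiv1 : HasDerivWithinAt f b (Iic 1) 1) :
    ∀ C : ℝ, ∃ s, c < s ∧ s < 1 ∧ C < YY f c s := by
  intro C
  obtain ⟨a₀, hca, h0a, ha1, hfu⟩ := f_upper hf hf0 hf1 hfpos hfout hc0 hc1 hb hderiv1
  have hFu := FF_upper hf hf0 hf1 hfpos hfout hc0 hc1 hb h0a ha1 hfu
  set K : ℝ := 3 * (-b) with hK
  have hKpos : (0:ℝ) < K := by rw [hK]; linarith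
  set β : ℝ := (Real.sqrt K)⁻¹ with hβ
  have hβpos : 0 < β := inv_pos.2 (Real.sqrt_pos.2 hKpos)
  -- gg bound
  have hggle : ∀ t, a₀ ≤ t → t ≤ 1 → gg f t ≤ Real.sqrt K * (1 - t) := by
    intro t hat ht1
    have h1 : gg f t ≤ Real.sqrt (K * (1-t)^2) :=
      Real.sqrt_le_sqrt (hFu t hat ht1)
    rw [Real.sqrt_mul hKpos.le, Real.sqrt_sq (by linarith)] at h1
    exact h1
  set D : ℝ := max 0 ((C - YY f c a₀)/β) + 1 with hD
  have hDpos : (0:ℝ) < D := by positivity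
  set s : ℝ := 1 - (1 - a₀) * Real.exp (-D) with hs
  have h1a : (0:ℝ) < 1 - a₀ := by linarith
  have hexp1 : Real.exp (-D) < 1 := Real.exp_lt_one_iff.2 (by linarith)
  have hexp0 : (0:ℝ) < Real.exp (-D) := Real.exp_pos _
  have h1s : (0:ℝ) < 1 - s := by
    rw [hs]; nlinarith [mul_pos h1a hexp0]
  have hs1 : s < 1 := by linarith
  have has : a₀ < s := by
    have : (1 - a₀) * Real.exp (-D) < (1 - a₀) * 1 := by
      exact mul_lt_mul_of_pos_left hexp1 h1a
    rw [hs]; nlinarith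
  refine ⟨s, lt_of_le_of_lt hca has, hs1, ?_⟩
  -- log integral
  have h1seq : 1 - s = (1 - a₀) * Real.exp (-D) := by rw [hs]; ring
  have hlog : Real.log (1 - s) = Real.log (1 - a₀) - D := by
    rw [h1seq, Real.log_mul (ne_of_gt h1a) (ne_of_gt hexp0), Real.log_exp]
    ring
  have hQint : (∫ t in a₀..s, (1-t)⁻¹) = Real.log (1 - a₀) - Real.log (1 - s) := by
    have hQ : ∀ t ∈ uIcc a₀ s, HasDerivAt (fun t => -Real.log (1-t)) ((1-t)⁻¹) t := by
      intro t ht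
      rw [uIcc_of_le has.le] at ht
      have h1t : (0:ℝ) < 1 - t := by
        rcases ht with ⟨_, h2⟩
        linarith [lt_of_le_of_lt h2 hs1]
      have hsub : HasDerivAt (fun t : ℝ => 1 - t) (-1) t := by
        simpa using (hasDerivAt_id t).const_sub 1
      have := (Real.hasDerivAt_log (ne_of_gt h1t)).comp t hsub
      have h2 := this.neg
      refine h2.congr_deriv ?_
      field_simp
    have hcont : IntervalIntegrable (fun t : ℝ => (1-t)⁻¹) MeasureTheory.volume a₀ s := by
      apply ContinuousOn.intervalIntegrable
      intro t ht
      rw [uIcc_of_le has.le] at ht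
      have h1t : (0:ℝ) < 1 - t := by linarith [lt_of_le_of_lt ht.2 hs1]
      exact ((continuous_const.sub continuous_id).continuousAt.inv₀ (ne_of_gt h1t)).continuousWithinAt
    rw [intervalIntegral.integral_eq_sub_of_hasDerivAt hQ hcont]
    ring
  -- comparison
  have hcomp : β * (Real.log (1 - a₀) - Real.log (1 - s)) ≤ YY f c s - YY f c a₀ := by
    rw [YY_sub hf hf0 hf1 hfpos hfout hc0 hc1 ha1 hs1, ← hQint,
      ← intervalIntegral.integral_const_mul]
    apply intervalIntegral.integral_mono_on has.le
    · apply ContinuousOn.intervalIntegrable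
      intro t ht
      rw [uIcc_of_le has.le] at ht
      have h1t : (0:ℝ) < 1 - t := by linarith [lt_of_le_of_lt ht.2 hs1]
      exact (continuous_const.continuousAt.mul
        ((continuous_const.sub continuous_id).continuousAt.inv₀ (ne_of_gt h1t))).continuousWithinAt
    · exact gginv_intble hf hf0 hf1 hfpos hfout hc0 hc1 ha1 hs1
    · intro t ht
      have ht1 : t < 1 := lt_of_le_of_lt ht.2 hs1
      have h1t : (0:ℝ) < 1 - t := by linarith
      have hgpos := gg_pos hf hf0 hf1 hfpos hfout ht1
      have hle := hggle t ht.1 ht1.le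
      have h2 : (Real.sqrt K * (1 - t))⁻¹ ≤ (gg f t)⁻¹ := by
        apply inv_anti₀ hgpos hle
      calc β * (1-t)⁻¹ = (Real.sqrt K * (1 - t))⁻¹ := by rw [mul_inv, hβ]
        _ ≤ (gg f t)⁻¹ := h2
  rw [hlog] at hcomp
  clear_value s D β
  have hβD : C - YY f c a₀ + β ≤ β * D := by
    have h4 : β * D = β * (max 0 ((C - YY f c a₀)/β)) + β := by rw [hD]; ring
    have h5 : C - YY f c a₀ ≤ β * (max 0 ((C - YY f c a₀)/β)) := by
      rcases le_total (C - YY f c a₀) 0 with h | h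
      · have : 0 ≤ β * (max 0 ((C - YY f c a₀)/β)) :=
          mul_nonneg hβpos.le (le_max_left _ _)
        linarith
      · rw [max_eq_right (div_nonneg h hβpos.le), mul_comm,
          div_mul_cancel₀ _ (ne_of_gt hβpos)]
    linarith
  have : β * (Real.log (1-a₀) - (Real.log (1-a₀) - D)) = β * D := by ring
  rw [this] at hcomp
  linarith

lemma YY_surj {b : ℝ} (hb : b < 0) (hderiv1 : HasDerivWithinAt f b (Iic 1) 1) :
    ∀ y : ℝ, ∃ s, s < 1 ∧ YY f c s = y := by
  intro y
  obtain ⟨s1, hs1lt, hs1⟩ := YY_unbdd_below hf hf0 hf1 hfpos hfout hc0 hc1 y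
  obtain ⟨s2, _, hs2lt, hs2⟩ := YY_unbdd_above hf hf0 hf1 hfpos hfout hc0 hc1 hb hderiv1 y
  have h12 : s1 < s2 := by
    by_contra h
    push_neg at h
    have := YY_monoOn hf hf0 hf1 hfpos hfout hc0 hc1 hs2lt hs1lt h
    linarith
  have hcont : ContinuousOn (YY f c) (Icc s1 s2) :=
    (YY_contOn hf hf0 hf1 hfpos hfout hc0 hc1).mono
      (fun t ht => lt_of_le_of_lt ht.2 hs2lt)
  have hy : y ∈ Icc (YY f c s1) (YY f c s2) := ⟨hs1.le, hs2.le⟩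
  obtain ⟨s, hs, hys⟩ := intermediate_value_Icc h12.le hcont hy
  exact ⟨s, lt_of_le_of_lt hs.2 hs2lt, hys⟩

variable {b : ℝ} (hb : b < 0) (hderiv1 : HasDerivWithinAt f b (Iic 1) 1)

noncomputable def phi (f : ℝ → ℝ) (c : ℝ)
    (hsurj : ∀ y : ℝ, ∃ s, s < 1 ∧ YY f c s = y) (y : ℝ) : ℝ :=
  Classical.choose (hsurj y)

variable (hsurj : ∀ y : ℝ, ∃ s, s < 1 ∧ YY f c s = y)

omit hc0 hc1 in
lemma phi_lt_one (y : ℝ) : phi f c hsurj y < 1 := (Classical.choose_spec (hsurj y)).1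

omit hc0 hc1 in
lemma YY_phi (y : ℝ) : YY f c (phi f c hsurj y) = y := (Classical.choose_spec (hsurj y)).2

include hsurj

lemma phi_eq_of_YY {s y : ℝ} (hs : s < 1) (h : YY f c s = y) : phi f c hsurj y = s := by
  apply (YY_strictMonoOn hf hf0 hf1 hfpos hfout hc0 hc1).injOn
    (phi_lt_one hf hf0 hf1 hfpos hfout hsurj y) hs
  rw [YY_phi hf hf0 hf1 hfpos hfout hsurj y, h]

lemma phi_strictMono : StrictMono (phi f c hsurj) := by
  intro y1 y2 h
  by_contra hcon
  push_neg at hcon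
  have := YY_monoOn hf hf0 hf1 hfpos hfout hc0 hc1
    (phi_lt_one hf hf0 hf1 hfpos hfout hsurj y2)
    (phi_lt_one hf hf0 hf1 hfpos hfout hsurj y1) hcon
  rw [YY_phi hf hf0 hf1 hfpos hfout hsurj y1,
    YY_phi hf hf0 hf1 hfpos hfout hsurj y2] at this
  linarith

lemma phi_continuous : Continuous (phi f c hsurj) := by
  rw [continuous_iff_continuousAt]
  intro y
  unfold ContinuousAt
  rw [tendsto_order]
  constructor
  · intro A hA
    set x := phi f c hsurj y with hx
    have hx1 : x < 1 := phi_lt_one hf hf0 hf1 hfpos hfout hsurj y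
    set A' : ℝ := (A + x)/2 with hA'
    have hA'x : A' < x := by rw [hA']; linarith
    have hAA' : A < A' := by rw [hA']; linarith
    have hA'1 : A' < 1 := lt_trans hA'x hx1
    have hY : YY f c A' < y := by
      have := YY_strictMonoOn hf hf0 hf1 hfpos hfout hc0 hc1 hA'1 hx1 hA'x
      rwa [hx, YY_phi hf hf0 hf1 hfpos hfout hsurj y] at this
    have hnhds : Ioi (YY f c A') ∈ 𝓝 y := Ioi_mem_nhds hY
    filter_upwards [hnhds] with y' hy'
    rw [mem_Ioi] at hy'
    by_contra hcon
    push_neg at hcon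
    have := YY_monoOn hf hf0 hf1 hfpos hfout hc0 hc1
      (phi_lt_one hf hf0 hf1 hfpos hfout hsurj y') hA'1 (le_trans hcon hAA'.le)
    rw [YY_phi hf hf0 hf1 hfpos hfout hsurj y'] at this
    linarith
  · intro B hB
    set x := phi f c hsurj y with hx
    have hx1 : x < 1 := phi_lt_one hf hf0 hf1 hfpos hfout hsurj y
    set B' : ℝ := (x + min B 1)/2 with hB'
    have hxm : x < min B 1 := lt_min hB hx1
    have hxB' : x < B' := by rw [hB']; linarith
    have hB'B : B' < B := by
      have : min B 1 ≤ B := min_le_left _ _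
      rw [hB']; linarith
    have hB'1 : B' < 1 := by
      have : min B 1 ≤ 1 := min_le_right _ _
      rw [hB']; linarith
    have hY : y < YY f c B' := by
      have := YY_strictMonoOn hf hf0 hf1 hfpos hfout hc0 hc1 hx1 hB'1 hxB'
      rwa [hx, YY_phi hf hf0 hf1 hfpos hfout hsurj y] at this
    have hnhds : Iio (YY f c B') ∈ 𝓝 y := Iio_mem_nhds hY
    filter_upwards [hnhds] with y' hy'
    rw [mem_Iio] at hy'
    by_contra hcon
    push_neg at hcon
    have := YY_monoOn hf hf0 hf1 hfpos hfout hc0 hc1 hB'1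
      (phi_lt_one hf hf0 hf1 hfpos hfout hsurj y') (le_trans hB'B.le hcon)
    rw [YY_phi hf hf0 hf1 hfpos hfout hsurj y'] at this
    linarith

lemma phi_hasDeriv (y : ℝ) :
    HasDerivAt (phi f c hsurj) (gg f (phi f c hsurj y)) y := by
  have h := HasDerivAt.of_local_left_inverse
    ((phi_continuous hf hf0 hf1 hfpos hfout hc0 hc1 hsurj).continuousAt)
    (YY_hasDeriv hf hf0 hf1 hfpos hfout hc0 hc1
      (phi_lt_one hf hf0 hf1 hfpos hfout hsurj y))
    (ne_of_gt (inv_pos.2 (gg_pos hf hf0 hf1 hfpos hfout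
      (phi_lt_one hf hf0 hf1 hfpos hfout hsurj y))))
    (Filter.Eventually.of_forall (YY_phi hf hf0 hf1 hfpos hfout hsurj))
  rwa [inv_inv] at h

lemma phi_deriv2 (y : ℝ) :
    HasDerivAt (fun y => gg f (phi f c hsurj y)) (-f (phi f c hsurj y)) y := by
  have h1 := (gg_hasDeriv hf hf0 hf1 hfpos hfout
    (phi_lt_one hf hf0 hf1 hfpos hfout hsurj y)).comp y
    (phi_hasDeriv hf hf0 hf1 hfpos hfout hc0 hc1 hsurj y)
  have hgne := ne_of_gt (gg_pos hf hf0 hf1 hfpos hfout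
    (phi_lt_one hf hf0 hf1 hfpos hfout hsurj y))
  refine h1.congr_deriv ?_
  field_simp


lemma phi_zero (hYc : YY f c c = 0) : phi f c hsurj 0 = c :=
  phi_eq_of_YY hf hf0 hf1 hfpos hfout hc0 hc1 hsurj hc1 hYc

lemma phi_tendsto : Tendsto (phi f c hsurj) atTop (𝓝 1) := by
  have hmono := (phi_strictMono hf hf0 hf1 hfpos hfout hc0 hc1 hsurj).monotone
  have hbdd : BddAbove (range (phi f c hsurj)) := by
    refine ⟨1, ?_⟩
    rintro _ ⟨y, rfl⟩
    exact (phi_lt_one hf hf0 hf1 hfpos hfout hsurj y).le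
  have htend := tendsto_atTop_ciSup hmono hbdd
  set L : ℝ := ⨆ y, phi f c hsurj y with hL
  have hL1 : L ≤ 1 := ciSup_le (fun y => (phi_lt_one hf hf0 hf1 hfpos hfout hsurj y).le)
  have hLeq : L = 1 := by
    by_contra hcon
    have hLlt : L < 1 := lt_of_le_of_ne hL1 hcon
    have hub : ∀ y : ℝ, y ≤ YY f c L := by
      intro y
      have h1 : phi f c hsurj y ≤ L := le_ciSup hbdd y
      have := YY_monoOn hf hf0 hf1 hfpos hfout hc0 hc1
        (phi_lt_one hf hf0 hf1 hfpos hfout hsurj y) hLlt h1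
      rwa [YY_phi hf hf0 hf1 hfpos hfout hsurj y] at this
    have := hub (YY f c L + 1)
    linarith
  rwa [hLeq] at htend


include hb hderiv1 in
lemma uniqueness {ϱ : ℝ} (hϱ : 0 ≤ ϱ) (hc : c = ϱ * gg f c)
    (ψ ψ' : ℝ → ℝ)
    (hψ : ∀ y ∈ Ici (0:ℝ), HasDerivAt ψ (ψ' y) y)
    (hψ'' : ∀ y ∈ Ici (0:ℝ), HasDerivAt ψ' (-f (ψ y)) y)
    (hbc : ϱ * ψ' 0 = ψ 0)
    (hnz : ∃ y ∈ Ici (0:ℝ), ψ y ≠ 0)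
    (hbdd : ∃ M, ∀ y ∈ Ici (0:ℝ), |ψ y| ≤ M) :
    ∀ y ∈ Ici (0:ℝ), ψ y = phi f c hsurj y := by
  obtain ⟨M, hM⟩ := hbdd
  have hM0 : 0 ≤ M := le_trans (abs_nonneg _) (hM 0 Set.self_mem_Ici)
  have hfnn := f_nonneg hf hf0 hf1 hfpos hfout
  -- ψ' is antitone on Ici 0
  have hψ'cont : ContinuousOn ψ' (Ici 0) :=
    fun y hy => (hψ'' y hy).continuousAt.continuousWithinAt
  have hψcont : ContinuousOn ψ (Ici 0) :=
    fun y hy => (hψ y hy).continuousAt.continuousWithinAt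
  have hψ'anti : AntitoneOn ψ' (Ici 0) := by
    apply antitoneOn_of_deriv_nonpos (convex_Ici 0) hψ'cont
    · intro x hx
      rw [interior_Ici] at hx
      exact (hψ'' x (mem_Ici.2 (le_of_lt (mem_Ioi.1 hx)))).differentiableAt.differentiableWithinAt
    · intro x hx
      rw [interior_Ici] at hx
      rw [(hψ'' x (mem_Ici.2 (le_of_lt (mem_Ioi.1 hx)))).deriv]
      simp [hfnn (ψ x)]
  -- ψ' nonneg
  have hψ'nonneg : ∀ y ∈ Ici (0:ℝ), 0 ≤ ψ' y := by
    by_contra hcon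
    push_neg at hcon
    obtain ⟨y₀, hy₀, hneg⟩ := hcon
    set T : ℝ := y₀ + (M + |ψ y₀| + 1)/(-ψ' y₀) with hT
    have hTgt : y₀ < T := by
      rw [hT]
      have : 0 < (M + |ψ y₀| + 1)/(-ψ' y₀) :=
        div_pos (by positivity) (by linarith)
      linarith
    obtain ⟨ξ, hξ, hslope⟩ := exists_hasDerivAt_eq_slope ψ ψ' hTgt
      (hψcont.mono (fun x hx => le_trans hy₀ hx.1))
      (fun x hx => hψ x (le_trans hy₀ hx.1.le))
    have hξ' : ψ' ξ ≤ ψ' y₀ := hψ'anti hy₀ (le_trans hy₀ hξ.1.le) hξ.1.le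
    have hTne : T - y₀ ≠ 0 := ne_of_gt (by linarith)
    have heq : ψ T - ψ y₀ = ψ' ξ * (T - y₀) := by
      rw [eq_div_iff hTne] at hslope
      linarith [hslope]
    have hprod : ψ' y₀ * (T - y₀) = -(M + |ψ y₀| + 1) := by
      have hne : -ψ' y₀ ≠ 0 := ne_of_gt (by linarith)
      have hne' : ψ' y₀ ≠ 0 := ne_of_lt hneg
      rw [hT]
      field_simp
      ring
    have h1 : ψ' ξ * (T - y₀) ≤ ψ' y₀ * (T - y₀) :=
      mul_le_mul_of_nonneg_right hξ' (by linarith)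
    have h2 : ψ T ≤ ψ y₀ - (M + |ψ y₀| + 1) := by linarith
    have h3 : -M ≤ ψ T := neg_le_of_abs_le (hM T (le_trans hy₀ hTgt.le))
    have h4 : ψ y₀ ≤ |ψ y₀| := le_abs_self _
    linarith
  -- ψ monotone
  have hψmono : MonotoneOn ψ (Ici 0) := by
    apply monotoneOn_of_deriv_nonneg (convex_Ici 0) hψcont
    · intro x hx
      rw [interior_Ici] at hx
      exact (hψ x (mem_Ici.2 (le_of_lt (mem_Ioi.1 hx)))).differentiableAt.differentiableWithinAt
    · intro x hx
      rw [interior_Ici] at hx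
      rw [(hψ x (mem_Ici.2 (le_of_lt (mem_Ioi.1 hx)))).deriv]
      exact hψ'nonneg x (mem_Ici.2 (le_of_lt (mem_Ioi.1 hx)))
  have hψ0 : 0 ≤ ψ 0 := by
    rw [← hbc]
    exact mul_nonneg hϱ (hψ'nonneg 0 Set.self_mem_Ici)
  have hψnn : ∀ y ∈ Ici (0:ℝ), 0 ≤ ψ y := fun y hy =>
    le_trans hψ0 (hψmono Set.self_mem_Ici hy hy)
  -- limit L of ψ
  set Ψ : ℝ → ℝ := fun y => ψ (max y 0) with hΨ
  have hΨmono : Monotone Ψ := fun y1 y2 h =>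
    hψmono (mem_Ici.2 (le_max_right _ _)) (mem_Ici.2 (le_max_right _ _)) (max_le_max h (le_refl 0))
  have hΨbdd : BddAbove (range Ψ) := by
    refine ⟨M, ?_⟩
    rintro _ ⟨y, rfl⟩
    exact le_of_abs_le (hM _ (mem_Ici.2 (le_max_right _ _)))
  have htendΨ := tendsto_atTop_ciSup hΨmono hΨbdd
  set L : ℝ := ⨆ y, Ψ y with hL
  have hΨψ : Ψ =ᶠ[atTop] ψ := by
    rw [EventuallyEq, eventually_atTop]
    exact ⟨0, fun y hy => by rw [hΨ]; simp [max_eq_left hy]⟩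
  have htendψL : Tendsto ψ atTop (𝓝 L) := htendΨ.congr' hΨψ
  have hψleL : ∀ y ∈ Ici (0:ℝ), ψ y ≤ L := by
    intro y hy
    have h2 : Ψ y ≤ L := le_ciSup hΨbdd y
    have h3 : Ψ y = ψ y := by rw [hΨ]; simp [max_eq_left (mem_Ici.1 hy)]
    linarith [h2, h3.symm.le]
  have hL0 : 0 ≤ L := le_trans hψ0 (hψleL 0 Set.self_mem_Ici)
  -- limit m of ψ'
  set Ψ' : ℝ → ℝ := fun y => ψ' (max y 0) with hΨ'
  have hΨ'anti : Antitone Ψ' := fun y1 y2 h =>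
    hψ'anti (mem_Ici.2 (le_max_right _ _)) (mem_Ici.2 (le_max_right _ _)) (max_le_max h (le_refl 0))
  have hΨ'bdd : BddBelow (range Ψ') := by
    refine ⟨0, ?_⟩
    rintro _ ⟨y, rfl⟩
    exact hψ'nonneg _ (mem_Ici.2 (le_max_right _ _))
  have htendΨ' := tendsto_atTop_ciInf hΨ'anti hΨ'bdd
  set m : ℝ := ⨅ y, Ψ' y with hm
  have hΨ'ψ' : Ψ' =ᶠ[atTop] ψ' := by
    rw [EventuallyEq, eventually_atTop]
    exact ⟨0, fun y hy => by rw [hΨ']; simp [max_eq_left hy]⟩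
  have htendψ'm : Tendsto ψ' atTop (𝓝 m) := htendΨ'.congr' hΨ'ψ'
  have hm0 : 0 ≤ m := le_ciInf (fun y => hψ'nonneg _ (mem_Ici.2 (le_max_right _ _)))
  have hmle : ∀ y ∈ Ici (0:ℝ), m ≤ ψ' y := by
    intro y hy
    have h2 : m ≤ Ψ' y := ciInf_le hΨ'bdd y
    have h3 : Ψ' y = ψ' y := by rw [hΨ']; simp [max_eq_left (mem_Ici.1 hy)]
    linarith [h2, h3.le]
  -- m = 0
  have hmz : m = 0 := by
    by_contra hcon
    have hmpos : 0 < m := lt_of_le_of_ne hm0 (Ne.symm hcon)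
    set T : ℝ := (2*M + 1)/m with hT
    have hTpos : 0 < T := by positivity
    obtain ⟨ξ, hξ, hslope⟩ := exists_hasDerivAt_eq_slope ψ ψ' hTpos
      (hψcont.mono (fun x hx => hx.1))
      (fun x hx => hψ x hx.1.le)
    have hξm : m ≤ ψ' ξ := hmle ξ hξ.1.le
    have heq : ψ T - ψ 0 = ψ' ξ * (T - 0) := by
      rw [eq_div_iff (by linarith : T - 0 ≠ 0)] at hslope
      linarith [hslope]
    have h1 : m * T ≤ ψ' ξ * (T - 0) := by
      rw [sub_zero]
      exact mul_le_mul_of_nonneg_right hξm hTpos.le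
    have h2 : m * T = 2*M + 1 := by
      rw [hT]
      field_simp
    have h3 : ψ T ≤ M := le_of_abs_le (hM T hTpos.le)
    have h4 : -M ≤ ψ 0 := neg_le_of_abs_le (hM 0 Set.self_mem_Ici)
    linarith
  -- energy
  set E : ℝ → ℝ := fun y => ψ' y ^ 2 + GG f (ψ y) with hE
  have hEderiv : ∀ y ∈ Ici (0:ℝ), HasDerivAt E 0 y := by
    intro y hy
    have h1 := ((hψ'' y hy).pow 2)
    have h2 := (GG_hasDeriv hf hf0 hf1 hfpos hfout (ψ y)).comp y (hψ y hy)
    have h3 := h1.add h2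
    refine h3.congr_deriv ?_
    norm_num
    ring
  have hEconst : ∀ y ∈ Ici (0:ℝ), E y = E 0 := by
    intro y hy
    have := constant_of_has_deriv_right_zero
      (f := E) (a := 0) (b := y)
      (fun x hx => (hEderiv x hx.1).continuousAt.continuousWithinAt)
      (fun x hx => (hEderiv x hx.1).hasDerivWithinAt)
    exact this y ⟨hy, le_refl y⟩
  -- E 0 = GG L
  have hE0L : E 0 = GG f L := by
    have ht1 : Tendsto E atTop (𝓝 (0^2 + GG f L)) := by
      apply Tendsto.add
      · have := htendψ'm.pow 2
        rwa [hmz] at this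
      · exact ((GG_cont hf hf0 hf1 hfpos hfout).continuousAt.tendsto).comp htendψL
    have ht2 : Tendsto E atTop (𝓝 (E 0)) := by
      apply Tendsto.congr' _ tendsto_const_nhds
      rw [EventuallyEq, eventually_atTop]
      exact ⟨0, fun y hy => (hEconst y hy).symm⟩
    have := tendsto_nhds_unique ht2 ht1
    simpa using this
  -- f L = 0
  have hfL : f L = 0 := by
    by_contra hne
    have hfLpos : 0 < f L := lt_of_le_of_ne (hfnn L) (Ne.symm hne)
    have htendf : Tendsto (fun y => f (ψ y)) atTop (𝓝 (f L)) :=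
      (hf.continuousAt.tendsto).comp htendψL
    have hev : ∀ᶠ y in atTop, f L / 2 < f (ψ y) :=
      htendf.eventually (eventually_gt_nhds (by linarith))
    obtain ⟨A₁, hA₁⟩ := eventually_atTop.1 hev
    set A : ℝ := max A₁ 0 with hA
    have hA0 : 0 ≤ A := le_max_right _ _
    set T : ℝ := A + (ψ' A + 1)/(f L / 2) with hT
    have hψ'A : 0 ≤ ψ' A := hψ'nonneg A hA0
    have hTgt : A < T := by
      rw [hT]
      have : 0 < (ψ' A + 1)/(f L / 2) := by positivity
      linarith
    obtain ⟨ξ, hξ, hslope⟩ := exists_hasDerivAt_eq_slope ψ' (fun x => -f (ψ x)) hTgt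
      (hψ'cont.mono (fun x hx => le_trans hA0 hx.1))
      (fun x hx => hψ'' x (le_trans hA0 hx.1.le))
    have hfξ : f L / 2 < f (ψ ξ) := hA₁ ξ (le_trans (le_max_left _ _) hξ.1.le)
    have heq : ψ' T - ψ' A = -f (ψ ξ) * (T - A) := by
      rw [eq_div_iff (by linarith : T - A ≠ 0)] at hslope
      linarith [hslope]
    have h1 : (f L / 2) * (T - A) = ψ' A + 1 := by
      rw [hT]
      field_simp
      ring
    have h2 : f (ψ ξ) * (T - A) ≥ (f L / 2) * (T - A) :=
      mul_le_mul_of_nonneg_right hfξ.le (by linarith)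
    have h3 : 0 ≤ ψ' T := hψ'nonneg T (le_trans hA0 hTgt.le)
    clear_value T A
    nlinarith [heq, h1, h2, h3]
  -- L ≥ 1
  have hLpos : 0 < L := by
    rcases lt_or_ge 0 L with h | h
    · exact h
    · exfalso
      obtain ⟨y, hy, hne⟩ := hnz
      exact hne (le_antisymm (le_trans (hψleL y hy) h) (hψnn y hy))
  have hL1 : 1 ≤ L := by
    by_contra hcon
    push_neg at hcon
    exact absurd hfL (ne_of_gt (hfpos L ⟨hLpos, hcon⟩))
  -- E 0 = GG 1
  have hGGL1 : GG f L = GG f 1 := by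
    have h1 := FF_eq_GG hf hf0 hf1 hfpos hfout L
    have h2 := FF_of_one_le hf hf0 hf1 hfpos hfout hL1
    linarith
  -- ψ' = gg ∘ ψ
  have hψ'gg : ∀ y ∈ Ici (0:ℝ), ψ' y = gg f (ψ y) := by
    intro y hy
    have h1 : ψ' y ^ 2 = FF f (ψ y) := by
      have hEy : ψ' y ^ 2 + GG f (ψ y) = E 0 := hEconst y hy
      have h2 := FF_eq_GG hf hf0 hf1 hfpos hfout (ψ y)
      linarith [hE0L, hGGL1]
    have : gg f (ψ y) = Real.sqrt (ψ' y ^ 2) := by rw [gg, h1]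
    rw [this, Real.sqrt_sq (hψ'nonneg y hy)]
  -- the Y-trick
  have hYtrick : ∀ b₀ ∈ Ici (0:ℝ), (∀ x, 0 ≤ x → x ≤ b₀ → ψ x < 1) →
      YY f c (ψ b₀) = YY f c (ψ 0) + b₀ := by
    intro b₀ hb₀ hlt
    set W : ℝ → ℝ := fun y => YY f c (ψ y) - y with hW
    have hWd : ∀ x, 0 ≤ x → x ≤ b₀ → HasDerivAt W 0 x := by
      intro x hx0 hxb
      have h1 := (YY_hasDeriv hf hf0 hf1 hfpos hfout hc0 hc1 (hlt x hx0 hxb)).comp x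
        (hψ x hx0)
      have h2 := h1.sub (hasDerivAt_id x)
      have hgne := ne_of_gt (gg_pos hf hf0 hf1 hfpos hfout (hlt x hx0 hxb))
      refine h2.congr_deriv ?_
      rw [hψ'gg x hx0]
      field_simp
      ring
    have := constant_of_has_deriv_right_zero
      (f := W) (a := 0) (b := b₀)
      (fun x hx => (hWd x hx.1 hx.2).continuousAt.continuousWithinAt)
      (fun x hx => (hWd x hx.1 hx.2.le).hasDerivWithinAt)
    have hWb : YY f c (ψ b₀) - b₀ = YY f c (ψ 0) - 0 := this b₀ ⟨hb₀, le_refl b₀⟩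
    linarith
  -- ψ < 1 on Ici 0
  have hψlt1 : ∀ y ∈ Ici (0:ℝ), ψ y < 1 := by
    by_contra hcon
    push_neg at hcon
    obtain ⟨y₃, hy₃, hge⟩ := hcon
    set S : Set ℝ := {y | 0 ≤ y ∧ 1 ≤ ψ y} with hS
    have hSne : S.Nonempty := ⟨y₃, hy₃, hge⟩
    have hSbdd : BddBelow S := ⟨0, fun y hy => hy.1⟩
    set y₄ : ℝ := sInf S with hy₄
    have hy₄0 : 0 ≤ y₄ := le_csInf hSne (fun y hy => hy.1)
    have hψy₄ : 1 ≤ ψ y₄ := by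
      by_contra hc2
      push_neg at hc2
      have hcont : ContinuousAt ψ y₄ := (hψ y₄ hy₄0).continuousAt
      have hev : ∀ᶠ y in 𝓝 y₄, ψ y < 1 :=
        hcont.eventually (eventually_lt_nhds hc2)
      rw [Metric.eventually_nhds_iff] at hev
      obtain ⟨ε, hε, hball⟩ := hev
      obtain ⟨y, hyS, hylt⟩ := exists_lt_of_csInf_lt hSne
        (show y₄ < y₄ + ε by linarith)
      have hyge : y₄ ≤ y := csInf_le hSbdd hyS
      have : ψ y < 1 := hball (by rw [Real.dist_eq, abs_lt]; constructor <;> linarith)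
      linarith [hyS.2]
    have hy₄pos : 0 < y₄ := by
      rcases eq_or_lt_of_le hy₄0 with h | h
      · exfalso
        have hψ'0 : ψ' 0 = 0 := by
          rw [hψ'gg 0 Set.self_mem_Ici]
          rw [← h] at hψy₄
          unfold gg
          rw [FF_of_one_le hf hf0 hf1 hfpos hfout hψy₄, Real.sqrt_zero]
        rw [hψ'0, mul_zero] at hbc
        rw [← h] at hψy₄
        linarith
      · exact h
    -- contradiction via Y-trick
    set C : ℝ := YY f c (ψ 0) + y₄ with hC
    obtain ⟨s, hcs, hs1, hsC⟩ := YY_unbdd_above hf hf0 hf1 hfpos hfout hc0 hc1 hb hderiv1 C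
    have hev : ∀ᶠ y in 𝓝 y₄, s < ψ y :=
      ((hψ y₄ hy₄0).continuousAt).eventually
        (eventually_gt_nhds (lt_of_lt_of_le hs1 hψy₄))
    rw [Metric.eventually_nhds_iff] at hev
    obtain ⟨ε, hε, hball⟩ := hev
    set y : ℝ := max (y₄ - ε/2) (y₄/2) with hy
    have hylt : y < y₄ := max_lt (by linarith) (by linarith)
    have hy0 : 0 ≤ y := le_trans (by linarith) (le_max_right _ _)
    have hydist : dist y y₄ < ε := by
      rw [Real.dist_eq, abs_lt]
      constructor
      · have : y₄ - ε/2 ≤ y := le_max_left _ _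
        linarith
      · linarith
    have hψys : s < ψ y := hball hydist
    have hnotS : ∀ x, 0 ≤ x → x ≤ y → ψ x < 1 := by
      intro x hx0 hxy
      by_contra hc3
      push_neg at hc3
      have : y₄ ≤ x := csInf_le hSbdd ⟨hx0, hc3⟩
      linarith
    have htrick := hYtrick y hy0 hnotS
    have hψy1 : ψ y < 1 := hnotS y hy0 (le_refl y)
    have hmono := YY_monoOn hf hf0 hf1 hfpos hfout hc0 hc1 hs1 hψy1 hψys.le
    rw [htrick] at hmono
    linarith
  -- ψ 0 = c
  have hψ0c : ψ 0 = c := by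
    have h1 : ψ 0 = ϱ * gg f (ψ 0) := by
      conv_lhs => rw [← hbc]
      rw [hψ'gg 0 Set.self_mem_Ici]
    exact root_unique hf hf0 hf1 hfpos hfout ϱ hϱ h1 hc
  -- conclusion
  intro y hy
  have htrick := hYtrick y hy (fun x hx0 hxy => hψlt1 x hx0)
  have hYcc : YY f c c = 0 := by simp [YY]
  rw [hψ0c, hYcc] at htrick
  have hphi := YY_phi hf hf0 hf1 hfpos hfout hsurj y
  apply (YY_strictMonoOn hf hf0 hf1 hfpos hfout hc0 hc1).injOn
    (hψlt1 y hy) (phi_lt_one hf hf0 hf1 hfpos hfout hsurj y)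
  rw [htrick, hphi]
  ring

end Stmt9Aux


open Stmt9Aux in
theorem stmt9 (f : ℝ → ℝ) (hf : Continuous f)
    (hf0 : f 0 = 0) (hf1 : f 1 = 0)
    (hfpos : ∀ s ∈ Ioo (0:ℝ) 1, 0 < f s)
    (hfout : ∀ s, s ∉ Icc (0:ℝ) 1 → f s = 0)
    (a : ℝ) (ha : 0 < a) (hderiv0 : HasDerivWithinAt f a (Ici 0) 0)
    (b : ℝ) (hb : b < 0) (hderiv1 : HasDerivWithinAt f b (Iic 1) 1)
    (ϱ : ℝ) (hϱ : 0 ≤ ϱ) :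
    ∃ φ φ' : ℝ → ℝ,
      (∀ y ∈ Ici (0:ℝ), HasDerivAt φ (φ' y) y) ∧
      (∀ y ∈ Ici (0:ℝ), HasDerivAt φ' (-f (φ y)) y) ∧
      ϱ * φ' 0 = φ 0 ∧
      (∃ y ∈ Ici (0:ℝ), φ y ≠ 0) ∧
      (∃ M, ∀ y ∈ Ici (0:ℝ), |φ y| ≤ M) ∧
      (∀ y ∈ Ici (0:ℝ), 0 ≤ φ y ∧ φ y < 1) ∧
      (∀ y ∈ Ici (0:ℝ), 0 < φ' y) ∧
      Tendsto φ atTop (nhds 1) ∧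
      (∀ ψ ψ' : ℝ → ℝ,
        (∀ y ∈ Ici (0:ℝ), HasDerivAt ψ (ψ' y) y) →
        (∀ y ∈ Ici (0:ℝ), HasDerivAt ψ' (-f (ψ y)) y) →
        ϱ * ψ' 0 = ψ 0 → (∃ y ∈ Ici (0:ℝ), ψ y ≠ 0) →
        (∃ M, ∀ y ∈ Ici (0:ℝ), |ψ y| ≤ M) →
        ∀ y ∈ Ici (0:ℝ), ψ y = φ y) := by
  obtain ⟨c, hc0, hc1, hc⟩ := root_exists hf hf0 hf1 hfpos hfout ϱ hϱ
  have hsurj := YY_surj hf hf0 hf1 hfpos hfout hc0 hc1 hb hderiv1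
  have hYc : YY f c c = 0 := by simp [YY]
  have hphi0 : phi f c hsurj 0 = c :=
    phi_zero hf hf0 hf1 hfpos hfout hc0 hc1 hsurj hYc
  have hmono := (phi_strictMono hf hf0 hf1 hfpos hfout hc0 hc1 hsurj).monotone
  have hnn : ∀ y ∈ Ici (0:ℝ), 0 ≤ phi f c hsurj y := by
    intro y hy
    have := hmono (show (0:ℝ) ≤ y from hy)
    rw [hphi0] at this
    linarith
  refine ⟨phi f c hsurj, fun y => gg f (phi f c hsurj y), ?_, ?_, ?_, ?_, ?_, ?_, ?_, ?_, ?_⟩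
  · intro y _
    exact phi_hasDeriv hf hf0 hf1 hfpos hfout hc0 hc1 hsurj y
  · intro y _
    exact phi_deriv2 hf hf0 hf1 hfpos hfout hc0 hc1 hsurj y
  · show ϱ * gg f (phi f c hsurj 0) = phi f c hsurj 0
    rw [hphi0, ← hc]
  · by_cases hcz : c = 0
    · refine ⟨1, by norm_num, ne_of_gt ?_⟩
      have h01 := phi_strictMono hf hf0 hf1 hfpos hfout hc0 hc1 hsurj (show (0:ℝ) < 1 by norm_num)
      have h0 : phi f c hsurj 0 = 0 := by rw [hphi0, hcz]
      linarith
    · exact ⟨0, Set.self_mem_Ici, by rw [hphi0]; exact hcz⟩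
  · refine ⟨1, fun y hy => abs_le.2 ⟨?_, ?_⟩⟩
    · linarith [hnn y hy]
    · exact (phi_lt_one hf hf0 hf1 hfpos hfout hsurj y).le
  · exact fun y hy => ⟨hnn y hy, phi_lt_one hf hf0 hf1 hfpos hfout hsurj y⟩
  · intro y _
    exact gg_pos hf hf0 hf1 hfpos hfout (phi_lt_one hf hf0 hf1 hfpos hfout hsurj y)
  · exact phi_tendsto hf hf0 hf1 hfpos hfout hc0 hc1 hsurj
  · intro ψ ψ' h1 h2 h3 h4 h5
    exact uniqueness hf hf0 hf1 hfpos hfout hc0 hc1 hb hderiv1 hsurj hϱ hc ψ ψ' h1 h2 h3 h4 h5
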